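/- Let F be a field, M = {1,2,3,4}, and K, Q : M² → F determinantally equivalent functions. Let q⁽¹⁾=(1,2,3,4,1), q⁽²⁾=(1,2,4,3,1), q⁽³⁾=(1,3,2,4,1) be the three 4-cycles on M. Then K[q⁽¹⁾]+K'[q⁽¹⁾]+K[q⁽²⁾]+K'[q⁽²⁾]+K[q⁽³⁾]+K'[q⁽³⁾] = Q[q⁽¹⁾]+Q'[q⁽¹⁾]+Q[q⁽²⁾]+Q'[q⁽²⁾]+Q[q⁽³⁾]+Q'[q⁽³⁾]. -/

import Mathlib

def DetEquiv {Λ F : Type*} [Field F] (K Q : Λ → Λ → F) : Prop :=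
  ∀ (n : ℕ) (x : Fin n → Λ),
    Matrix.det (Matrix.of fun i j => K (x i) (x j)) =
    Matrix.det (Matrix.of fun i j => Q (x i) (x j))

def ClassD {Λ F : Type*} [Field F] (h : Λ → Λ → F) : Prop :=
  ∀ x y z w : Λ, x ≠ y → x ≠ z → x ≠ w → y ≠ z → y ≠ w → z ≠ w →
    h x y * h w z - h x z * h w y ≠ 0

theorem stmt15 {F : Type*} [Field F] (K Q : Fin 4 → Fin 4 → F)
    (hKQ : DetEquiv K Q) :
    K 0 1 * K 1 2 * K 2 3 * K 3 0 + K 1 0 * K 2 1 * K 3 2 * K 0 3 +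
      K 0 1 * K 1 3 * K 3 2 * K 2 0 + K 1 0 * K 3 1 * K 2 3 * K 0 2 +
      K 0 2 * K 2 1 * K 1 3 * K 3 0 + K 2 0 * K 1 2 * K 3 1 * K 0 3 =
    Q 0 1 * Q 1 2 * Q 2 3 * Q 3 0 + Q 1 0 * Q 2 1 * Q 3 2 * Q 0 3 +
      Q 0 1 * Q 1 3 * Q 3 2 * Q 2 0 + Q 1 0 * Q 3 1 * Q 2 3 * Q 0 2 +
      Q 0 2 * Q 2 1 * Q 1 3 * Q 3 0 + Q 2 0 * Q 1 2 * Q 3 1 * Q 0 3 := by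
  have h1 : ∀ i : Fin 4, K i i = Q i i := by
    intro i
    have hd := hKQ 1 ![i]
    simpa [Matrix.det_fin_one] using hd
  have h2 : ∀ i j : Fin 4, K i j * K j i = Q i j * Q j i := by
    intro i j
    have hd := hKQ 2 ![i, j]
    simp [Matrix.det_fin_two] at hd
    linear_combination -hd + (K j j) * (h1 i) + (Q i i) * (h1 j)
  have h3 : ∀ a b c : Fin 4,
      K a b * K b c * K c a + K a c * K c b * K b a =
      Q a b * Q b c * Q c a + Q a c * Q c b * Q b a := by
    intro a b c
    have hd := hKQ 3 ![a, b, c]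
    simp [Matrix.det_fin_three] at hd
    linear_combination hd - (K b b * K c c) * (h1 a) - (Q a a * K c c) * (h1 b)
      - (Q a a * Q b b) * (h1 c)
      + (K b c * K c b) * (h1 a) + (Q a a) * (h2 b c)
      + (K a c * K c a) * (h1 b) + (Q b b) * (h2 a c)
      + (K a b * K b a) * (h1 c) + (Q c c) * (h2 a b)
  have hd := hKQ 4 ![0, 1, 2, 3]
  simp [Matrix.det_succ_row_zero, Fin.sum_univ_succ, Fin.succAbove, Matrix.det_fin_three, Fin.castSucc, Fin.castAdd, Fin.castLE, Matrix.cons_val_zero, Matrix.cons_val_one, Matrix.head_cons, Matrix.cons_val_succ] at hd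
  linear_combination -hd
    + (K 1 1 * K 2 2 * K 3 3) * (h1 0) + (Q 0 0 * K 2 2 * K 3 3) * (h1 1)
    + (Q 0 0 * Q 1 1 * K 3 3) * (h1 2) + (Q 0 0 * Q 1 1 * Q 2 2) * (h1 3)
    - ((K 2 2 * K 3 3) * (h2 0 1) + (Q 0 1 * Q 1 0) * ((K 3 3) * (h1 2) + (Q 2 2) * (h1 3)))
    - ((K 1 1 * K 3 3) * (h2 0 2) + (Q 0 2 * Q 2 0) * ((K 3 3) * (h1 1) + (Q 1 1) * (h1 3)))
    - ((K 1 1 * K 2 2) * (h2 0 3) + (Q 0 3 * Q 3 0) * ((K 2 2) * (h1 1) + (Q 1 1) * (h1 2)))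
    - ((K 0 0 * K 3 3) * (h2 1 2) + (Q 1 2 * Q 2 1) * ((K 3 3) * (h1 0) + (Q 0 0) * (h1 3)))
    - ((K 0 0 * K 2 2) * (h2 1 3) + (Q 1 3 * Q 3 1) * ((K 2 2) * (h1 0) + (Q 0 0) * (h1 2)))
    - ((K 0 0 * K 1 1) * (h2 2 3) + (Q 2 3 * Q 3 2) * ((K 1 1) * (h1 0) + (Q 0 0) * (h1 1)))
    + (K 2 3 * K 3 2) * (h2 0 1) + (Q 0 1 * Q 1 0) * (h2 2 3)
    + (K 1 3 * K 3 1) * (h2 0 2) + (Q 0 2 * Q 2 0) * (h2 1 3)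
    + (K 1 2 * K 2 1) * (h2 0 3) + (Q 0 3 * Q 3 0) * (h2 1 2)
    + (K 3 3) * (h3 0 1 2) + (Q 0 1 * Q 1 2 * Q 2 0 + Q 0 2 * Q 2 1 * Q 1 0) * (h1 3)
    + (K 2 2) * (h3 0 1 3) + (Q 0 1 * Q 1 3 * Q 3 0 + Q 0 3 * Q 3 1 * Q 1 0) * (h1 2)
    + (K 1 1) * (h3 0 2 3) + (Q 0 2 * Q 2 3 * Q 3 0 + Q 0 3 * Q 3 2 * Q 2 0) * (h1 1)
    + (K 0 0) * (h3 1 2 3) + (Q 1 2 * Q 2 3 * Q 3 1 + Q 1 3 * Q 3 2 * Q 2 1) * (h1 0)
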